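/- Fix an integer k ≥ 1. The probability mass function of V(k) satisfies P(V(k) = v) = P(V(k) = v−1) − p^k·q·P(V(k) = v−k−1) for every integer v > k+1, together with the initial conditions P(V(k) = v) = 0 for 0 ≤ v < k, P(V(k) = k) = p^k, and P(V(k) = k+1) = q·p^k. -/

import Mathlib

open MeasureTheory Finset

/-- Waiting time for the first success run of length `k`: the smallest `n ≥ k` such that
trials `n - k + 1, …, n` are all successes (trials are indexed from `1`). -/
noncomputable def waitingTime (k : ℕ) (ω : ℕ → Bool) : ℕ :=
  sInf {n | k ≤ n ∧ ∀ i ∈ Finset.Icc (n - k + 1) n, ω i = true}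

namespace Stmt7Aux

def cylSet (n : ℕ) (b : ℕ → Bool) : Set (ℕ → Bool) :=
  {ω | ∀ i, 1 ≤ i → i ≤ n → ω i = b i}

noncomputable def W (p : ℝ) (n : ℕ) (b : ℕ → Bool) : ℝ :=
  ∏ i ∈ Finset.Icc 1 n, if b i = true then p else 1 - p

lemma W_nonneg {p : ℝ} (hp0 : 0 ≤ p) (hp1 : p ≤ 1) (n : ℕ) (b : ℕ → Bool) :
    0 ≤ W p n b := by
  refine Finset.prod_nonneg fun i _ => ?_
  split <;> linarith

lemma cylSet_measurable (n : ℕ) (b : ℕ → Bool) : MeasurableSet (cylSet n b) := by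
  have h : cylSet n b = ⋂ (i : ℕ), ⋂ (_ : 1 ≤ i), ⋂ (_ : i ≤ n),
      ((fun ω : ℕ → Bool => ω i) ⁻¹' {b i}) := by
    ext ω; simp [cylSet]
  rw [h]
  exact MeasurableSet.iInter fun i => MeasurableSet.iInter fun _ =>
    MeasurableSet.iInter fun _ => measurable_pi_apply i (measurableSet_singleton _)

lemma measure_cylUnion (p : ℝ) (hp0 : 0 ≤ p) (hp1 : p ≤ 1)
    (μ : Measure (ℕ → Bool))
    (hμ : ∀ (n : ℕ) (b : ℕ → Bool), μ (cylSet n b) = ENNReal.ofReal (W p n b))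
    (n : ℕ) {ι : Type} [DecidableEq ι] (T : Finset ι) (f : ι → ℕ → Bool)
    (hinj : ∀ c ∈ T, ∀ c' ∈ T, (∀ i, 1 ≤ i → i ≤ n → f c i = f c' i) → c = c') :
    μ (⋃ c ∈ T, cylSet n (f c)) = ENNReal.ofReal (∑ c ∈ T, W p n (f c)) := by
  rw [measure_biUnion_finset ?disj (fun c _ => cylSet_measurable n (f c))]
  · rw [Finset.sum_congr rfl fun c _ => hμ n (f c),
      ← ENNReal.ofReal_sum_of_nonneg (fun c _ => W_nonneg hp0 hp1 n (f c))]
  case disj =>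
    intro c hc c' hc' hne
    rw [Function.onFun, Set.disjoint_left]
    intro ω hω hω'
    exact hne (hinj c hc c' hc' fun i h1 h2 => (hω i h1 h2).symm.trans (hω' i h1 h2))

def NRset (k m : ℕ) : Set (ℕ → Bool) :=
  {ω | ∀ n, k ≤ n → n ≤ m → ∃ i ∈ Finset.Icc (n - k + 1) n, ω i = false}

def ext (n : ℕ) (c : Fin n → Bool) : ℕ → Bool :=
  fun i => if h : 1 ≤ i ∧ i ≤ n then c ⟨i - 1, by omega⟩ else false

def extB (k v : ℕ) (c : Fin (v - k - 1) → Bool) : ℕ → Bool :=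
  fun i => if i ≤ v - k - 1 then ext (v - k - 1) c i else decide (v - k + 1 ≤ i ∧ i ≤ v)

lemma ext_eq (n : ℕ) (ω : ℕ → Bool) {i : ℕ} (h1 : 1 ≤ i) (h2 : i ≤ n) :
    ext n (fun j : Fin n => ω (j.1 + 1)) i = ω i := by
  rw [ext, dif_pos (show 1 ≤ i ∧ i ≤ n from ⟨h1, h2⟩)]
  show ω (i - 1 + 1) = ω i
  congr 1
  omega

lemma ext_apply {n : ℕ} (c : Fin n → Bool) (j : Fin n) : ext n c (j.1 + 1) = c j := by
  rw [ext, dif_pos (show 1 ≤ j.1 + 1 ∧ j.1 + 1 ≤ n from ⟨by omega, by omega⟩)]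
  exact congrArg c (Fin.ext (by simp))

lemma ext_inj {n : ℕ} {c c' : Fin n → Bool}
    (h : ∀ i, 1 ≤ i → i ≤ n → ext n c i = ext n c' i) : c = c' :=
  funext fun j => by rw [← ext_apply c j, ← ext_apply c' j]; exact h _ (by omega) (by omega)

lemma extB_inj {k v : ℕ} (hv : k + 1 ≤ v) {c c' : Fin (v - k - 1) → Bool}
    (h : ∀ i, 1 ≤ i → i ≤ v → extB k v c i = extB k v c' i) : c = c' := by
  refine ext_inj fun i h1 h2 => ?_
  have h3 := h i h1 (by omega)
  rwa [extB, extB, if_pos h2, if_pos h2] at h3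

lemma W_extB {p : ℝ} {k v : ℕ} (hk : 1 ≤ k) (hv : k + 1 ≤ v) (c : Fin (v - k - 1) → Bool) :
    W p v (extB k v c) = (1 - p) * p ^ k * W p (v - k - 1) (ext (v - k - 1) c) := by
  have h1 : Finset.Icc 1 v = Finset.Ioc 0 v := by rw [← Finset.Icc_add_one_left_eq_Ioc]; rfl
  have h2 : Finset.Icc 1 (v - k - 1) = Finset.Ioc 0 (v - k - 1) := by rw [← Finset.Icc_add_one_left_eq_Ioc]; rfl
  rw [W, W, h1, h2,
    ← Finset.prod_Ioc_consecutive _ (Nat.zero_le (v - k - 1)) (show v - k - 1 ≤ v by omega)]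
  have e1 : ∀ i ∈ Finset.Ioc 0 (v - k - 1),
      (if extB k v c i = true then p else 1 - p)
        = (if ext (v - k - 1) c i = true then p else 1 - p) := by
    intro i hi
    rw [Finset.mem_Ioc] at hi
    rw [extB, if_pos hi.2]
  have e2 : ∏ i ∈ Finset.Ioc (v - k - 1) v, (if extB k v c i = true then p else 1 - p)
      = (1 - p) * p ^ k := by
    rw [← Finset.prod_Ioc_consecutive _ (show v - k - 1 ≤ v - k by omega)
      (show v - k ≤ v by omega)]
    have e3 : ∀ i ∈ Finset.Ioc (v - k) v, (if extB k v c i = true then p else 1 - p) = p := by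
      intro i hi
      rw [Finset.mem_Ioc] at hi
      rw [extB, if_neg (show ¬ i ≤ v - k - 1 by omega),
        decide_eq_true (show v - k + 1 ≤ i ∧ i ≤ v by omega)]
      simp
    have e4 : Finset.Ioc (v - k - 1) (v - k) = {v - k} := by
      ext x
      simp only [Finset.mem_Ioc, Finset.mem_singleton]
      omega
    rw [Finset.prod_congr rfl e3, Finset.prod_const, Nat.card_Ioc,
      show v - (v - k) = k by omega, e4, Finset.prod_singleton,
      extB, if_neg (show ¬ v - k ≤ v - k - 1 by omega),
      decide_eq_false (show ¬ (v - k + 1 ≤ v - k ∧ v - k ≤ v) by omega)]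
    simp
  rw [Finset.prod_congr rfl e1, e2]
  ring

noncomputable def TNR (k m : ℕ) : Finset (Fin m → Bool) :=
  @Finset.filter _
    (fun c => ∀ n ∈ Finset.Icc k m, ∃ i ∈ Finset.Icc (n - k + 1) n, ext m c i = false)
    (Classical.decPred _) Finset.univ

lemma mem_TNR {k m : ℕ} {c : Fin m → Bool} :
    c ∈ TNR k m ↔ ∀ n ∈ Finset.Icc k m, ∃ i ∈ Finset.Icc (n - k + 1) n, ext m c i = false := by
  rw [TNR, @Finset.mem_filter _ _ (Classical.decPred _) _ _]
  simp

lemma NRset_eq (k m : ℕ) (hk : 1 ≤ k) :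
    NRset k m = ⋃ c ∈ TNR k m, cylSet m (ext m c) := by
  ext ω
  simp only [Set.mem_iUnion, exists_prop]
  constructor
  · intro hω
    refine ⟨fun j => ω (j.1 + 1), ?_, fun i h1 h2 => (ext_eq m ω h1 h2).symm⟩
    rw [mem_TNR]
    intro n hn
    rw [Finset.mem_Icc] at hn
    obtain ⟨i, hi, hωi⟩ := hω n hn.1 hn.2
    have hi' := Finset.mem_Icc.1 hi
    exact ⟨i, hi, by rw [ext_eq m ω (by omega) (by omega)]; exact hωi⟩
  · rintro ⟨c, hc, hω⟩ n hn1 hn2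
    obtain ⟨i, hi, hci⟩ := mem_TNR.1 hc n (Finset.mem_Icc.2 ⟨hn1, hn2⟩)
    have hi' := Finset.mem_Icc.1 hi
    exact ⟨i, hi, by rw [hω i (by omega) (by omega)]; exact hci⟩

lemma wt_eq_iff {k v : ℕ} (hv : 1 ≤ v) (ω : ℕ → Bool) :
    waitingTime k ω = v ↔
      IsLeast {n | k ≤ n ∧ ∀ i ∈ Finset.Icc (n - k + 1) n, ω i = true} v := by
  constructor
  · intro h
    have hne : {n | k ≤ n ∧ ∀ i ∈ Finset.Icc (n - k + 1) n, ω i = true}.Nonempty := by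
      by_contra hemp
      rw [Set.not_nonempty_iff_eq_empty] at hemp
      rw [waitingTime, hemp, Nat.sInf_empty] at h
      omega
    exact h ▸ ⟨Nat.sInf_mem hne, fun n hn => Nat.sInf_le hn⟩
  · exact fun h => h.csInf_eq

lemma Bv_eq {k v : ℕ} (hk : 1 ≤ k) (hv : k + 1 ≤ v) :
    {ω | waitingTime k ω = v}
      = ⋃ c ∈ TNR k (v - k - 1), cylSet v (extB k v c) := by
  ext ω
  simp only [Set.mem_iUnion, Set.mem_setOf_eq, exists_prop]
  rw [wt_eq_iff (by omega)]
  constructor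
  · rintro ⟨⟨hkv, hrun⟩, hlb⟩
    have hvk : ω (v - k) = false := by
      by_contra h
      rw [Bool.not_eq_false] at h
      have hmem : (v - 1) ∈ {n | k ≤ n ∧ ∀ i ∈ Finset.Icc (n - k + 1) n, ω i = true} := by
        refine ⟨by omega, fun i hi => ?_⟩
        rw [Finset.mem_Icc] at hi
        rcases Nat.eq_or_lt_of_le hi.1 with heq | hlt
        · rw [show i = v - k by omega]; exact h
        · exact hrun i (Finset.mem_Icc.2 ⟨by omega, by omega⟩)
      have := hlb hmem
      omega
    refine ⟨fun j => ω (j.1 + 1), ?_, ?_⟩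
    · rw [mem_TNR]
      intro n hn
      rw [Finset.mem_Icc] at hn
      have hnot : n ∉ {n | k ≤ n ∧ ∀ i ∈ Finset.Icc (n - k + 1) n, ω i = true} := by
        intro hmem
        have := hlb hmem
        omega
      simp only [Set.mem_setOf_eq, not_and, not_forall] at hnot
      obtain ⟨i, hi, hne⟩ := hnot hn.1
      have hi' := Finset.mem_Icc.1 hi
      refine ⟨i, hi, ?_⟩
      rw [ext_eq _ ω (by omega) (by omega)]
      simp only [Bool.not_eq_true] at hne
      exact hne
    · intro i h1 h2
      by_cases hsm : i ≤ v - k - 1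
      · rw [extB, if_pos hsm, ext_eq _ ω h1 hsm]
      · rw [extB, if_neg hsm]
        by_cases h3 : v - k + 1 ≤ i
        · rw [hrun i (Finset.mem_Icc.2 ⟨h3, h2⟩)]
          exact (decide_eq_true ⟨h3, h2⟩).symm
        · rw [show i = v - k by omega, hvk]
          exact (decide_eq_false (by omega)).symm
  · rintro ⟨c, hc, hω⟩
    have hQ := mem_TNR.1 hc
    constructor
    · refine ⟨by omega, fun i hi => ?_⟩
      rw [Finset.mem_Icc] at hi
      rw [hω i (by omega) (by omega), extB, if_neg (by omega)]
      simp only [decide_eq_true_eq]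
      omega
    · intro n hn
      obtain ⟨hn1, hrunn⟩ := hn
      by_contra hlt
      push_neg at hlt
      by_cases hsm : n ≤ v - k - 1
      · obtain ⟨i, hi, hci⟩ := hQ n (Finset.mem_Icc.2 ⟨hn1, hsm⟩)
        have hi' := Finset.mem_Icc.1 hi
        have ht := hrunn i hi
        rw [hω i (by omega) (by omega), extB, if_pos (by omega)] at ht
        rw [ht] at hci
        simp at hci
      · have hmem : v - k ∈ Finset.Icc (n - k + 1) n := Finset.mem_Icc.2 ⟨by omega, by omega⟩
        have ht := hrunn (v - k) hmem
        rw [hω (v - k) (by omega) (by omega), extB, if_neg (by omega)] at ht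
        simp only [decide_eq_true_eq] at ht
        omega

lemma Bk_eq {k : ℕ} (hk : 1 ≤ k) :
    {ω | waitingTime k ω = k} = {ω : ℕ → Bool | ∀ i, 1 ≤ i → i ≤ k → ω i = true} := by
  ext ω
  simp only [Set.mem_setOf_eq]
  rw [wt_eq_iff hk]
  constructor
  · rintro ⟨⟨_, hrun⟩, _⟩ i h1 h2
    exact hrun i (Finset.mem_Icc.2 ⟨by omega, h2⟩)
  · intro h
    refine ⟨⟨le_refl k, fun i hi => ?_⟩, fun n hn => hn.1⟩
    rw [Finset.mem_Icc] at hi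
    exact h i (by omega) hi.2

lemma Bsmall {k v : ℕ} (h1 : 1 ≤ v) (h2 : v < k) :
    {ω | waitingTime k ω = v} = ∅ := by
  ext ω
  simp only [Set.mem_setOf_eq, Set.mem_empty_iff_false, iff_false]
  rw [wt_eq_iff h1]
  rintro ⟨⟨hkv, _⟩, _⟩
  omega

lemma B0_sub {k : ℕ} (hk : 1 ≤ k) (m : ℕ) :
    {ω | waitingTime k ω = 0} ⊆ NRset k m := by
  intro ω h
  simp only [Set.mem_setOf_eq] at h
  rw [waitingTime, Nat.sInf_eq_zero] at h
  rcases h with h | h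
  · exact absurd h.1 (by omega)
  · intro n hn1 hn2
    have hn : n ∉ {n | k ≤ n ∧ ∀ i ∈ Finset.Icc (n - k + 1) n, ω i = true} := by rw [h]; simp
    simp only [Set.mem_setOf_eq, not_and, not_forall] at hn
    obtain ⟨i, hi, hne⟩ := hn hn1
    simp only [Bool.not_eq_true] at hne
    exact ⟨i, hi, hne⟩

lemma NR_step {k : ℕ} (hk : 1 ≤ k) (m : ℕ) :
    NRset k m = NRset k (m + 1) ∪ {ω | waitingTime k ω = m + 1} := by
  ext ω
  simp only [Set.mem_union, Set.mem_setOf_eq]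
  constructor
  · intro h
    by_cases h2 : ω ∈ NRset k (m + 1)
    · exact Or.inl h2
    · right
      simp only [NRset, Set.mem_setOf_eq, not_forall] at h2
      obtain ⟨n, hn1, hn2, hfail⟩ := h2
      have hn : n = m + 1 := by
        by_contra hne
        exact hfail (h n hn1 (by omega))
      subst hn
      push_neg at hfail
      simp only [Bool.not_eq_false] at hfail
      rw [wt_eq_iff (by omega)]
      refine ⟨⟨hn1, hfail⟩, ?_⟩
      intro n' hn'
      by_contra hlt
      push_neg at hlt
      obtain ⟨i, hi, hif⟩ := h n' hn'.1 (by omega)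
      rw [hn'.2 i hi] at hif
      simp at hif
  · intro h n hn1 hn2
    rcases h with h | h
    · exact h n hn1 (by omega)
    · rw [wt_eq_iff (by omega)] at h
      have hn : n ∉ {n | k ≤ n ∧ ∀ i ∈ Finset.Icc (n - k + 1) n, ω i = true} := by
        intro hmem
        have := h.2 hmem
        omega
      simp only [Set.mem_setOf_eq, not_and, not_forall] at hn
      obtain ⟨i, hi, hne⟩ := hn hn1
      simp only [Bool.not_eq_true] at hne
      exact ⟨i, hi, hne⟩

lemma NR_disj {k : ℕ} (m : ℕ) :
    Disjoint (NRset k (m + 1)) {ω | waitingTime k ω = m + 1} := by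
  rw [Set.disjoint_right]
  intro ω h
  rw [Set.mem_setOf_eq, wt_eq_iff (by omega)] at h
  obtain ⟨⟨hkm, hrun⟩, _⟩ := h
  intro hNR
  obtain ⟨i, hi, hif⟩ := hNR (m + 1) hkm (le_refl _)
  rw [hrun i hi] at hif
  simp at hif

lemma NR_univ {k : ℕ} (hk : 1 ≤ k) : NRset k 0 = Set.univ := by
  ext ω
  simp only [NRset, Set.mem_setOf_eq, Set.mem_univ, iff_true]
  intro n h1 h2
  omega

lemma B_meas {k : ℕ} (hk : 1 ≤ k) {v : ℕ} (hv : 1 ≤ v) :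
    MeasurableSet {ω : ℕ → Bool | waitingTime k ω = v} := by
  rcases lt_trichotomy v k with h | h | h
  · rw [Bsmall hv h]
    exact MeasurableSet.empty
  · rw [show v = k from h, Bk_eq hk]
    exact cylSet_measurable k (fun _ => true)
  · rw [Bv_eq hk h]
    exact (TNR k (v - k - 1)).measurableSet_biUnion fun c _ => cylSet_measurable v (extB k v c)

lemma measure_NR {p : ℝ} (hp0 : 0 ≤ p) (hp1 : p ≤ 1) (μ : Measure (ℕ → Bool))
    (hμ : ∀ (n : ℕ) (b : ℕ → Bool), μ (cylSet n b) = ENNReal.ofReal (W p n b))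
    {k : ℕ} (hk : 1 ≤ k) (m : ℕ) :
    μ (NRset k m) = ENNReal.ofReal (∑ c ∈ TNR k m, W p m (ext m c)) := by
  rw [NRset_eq k m hk]
  exact measure_cylUnion p hp0 hp1 μ hμ m (TNR k m) (ext m) (fun c _ c' _ h => ext_inj h)

lemma measure_Bv {p : ℝ} (hp0 : 0 ≤ p) (hp1 : p ≤ 1) (μ : Measure (ℕ → Bool))
    (hμ : ∀ (n : ℕ) (b : ℕ → Bool), μ (cylSet n b) = ENNReal.ofReal (W p n b))
    {k : ℕ} (hk : 1 ≤ k) {v : ℕ} (hv : k + 1 ≤ v) :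
    μ {ω | waitingTime k ω = v}
      = ENNReal.ofReal ((1 - p) * p ^ k
          * ∑ c ∈ TNR k (v - k - 1), W p (v - k - 1) (ext (v - k - 1) c)) := by
  rw [Bv_eq hk hv, measure_cylUnion p hp0 hp1 μ hμ v (TNR k (v - k - 1)) (extB k v)
    (fun c _ c' _ h => extB_inj hv h)]
  congr 1
  rw [Finset.mul_sum]
  exact Finset.sum_congr rfl fun c _ => W_extB hk hv c

end Stmt7Aux

theorem stmt7 (p : ℝ) (hp0 : 0 < p) (hp1 : p < 1) (k : ℕ) (hk : 1 ≤ k)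
    (μ : Measure (ℕ → Bool)) [IsProbabilityMeasure μ]
    (hμ : ∀ (n : ℕ) (b : ℕ → Bool),
      μ {ω | ∀ i, 1 ≤ i → i ≤ n → ω i = b i}
        = ENNReal.ofReal (∏ i ∈ Finset.Icc 1 n, if b i = true then p else 1 - p)) :
    (∀ v : ℕ, v < k → (μ {ω | waitingTime k ω = v}).toReal = 0) ∧
    (μ {ω | waitingTime k ω = k}).toReal = p ^ k ∧
    (μ {ω | waitingTime k ω = k + 1}).toReal = (1 - p) * p ^ k ∧
    (∀ v : ℕ, k + 1 < v →
      (μ {ω | waitingTime k ω = v}).toReal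
        = (μ {ω | waitingTime k ω = v - 1}).toReal
          - p ^ k * (1 - p) * (μ {ω | waitingTime k ω = v - k - 1}).toReal) := by
  have hp0' : (0:ℝ) ≤ p := le_of_lt hp0
  have hp1' : p ≤ 1 := le_of_lt hp1
  have hμ' : ∀ (n : ℕ) (b : ℕ → Bool),
      μ (Stmt7Aux.cylSet n b) = ENNReal.ofReal (Stmt7Aux.W p n b) := fun n b => hμ n b
  have hcpos : 0 < (1 - p) * p ^ k := mul_pos (by linarith) (pow_pos hp0 k)
  have hfin : ∀ s : Set (ℕ → Bool), μ s ≠ ⊤ := fun s => measure_ne_top μ s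
  have hGnn : ∀ m : ℕ, 0 ≤ ∑ c ∈ Stmt7Aux.TNR k m, Stmt7Aux.W p m (Stmt7Aux.ext m c) :=
    fun m => Finset.sum_nonneg fun c _ => Stmt7Aux.W_nonneg hp0' hp1' m _
  have hgval : ∀ m : ℕ, (μ (Stmt7Aux.NRset k m)).toReal
      = ∑ c ∈ Stmt7Aux.TNR k m, Stmt7Aux.W p m (Stmt7Aux.ext m c) := by
    intro m
    rw [Stmt7Aux.measure_NR hp0' hp1' μ hμ' hk m, ENNReal.toReal_ofReal (hGnn m)]
  have hfval : ∀ v : ℕ, k + 1 ≤ v → (μ {ω | waitingTime k ω = v}).toReal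
      = (1 - p) * p ^ k * (μ (Stmt7Aux.NRset k (v - k - 1))).toReal := by
    intro v hv
    rw [Stmt7Aux.measure_Bv hp0' hp1' μ hμ' hk hv, ENNReal.toReal_ofReal
      (mul_nonneg (le_of_lt hcpos) (hGnn _)), hgval (v - k - 1)]
  have hfnn : ∀ v : ℕ, 0 ≤ (μ {ω | waitingTime k ω = v}).toReal :=
    fun v => ENNReal.toReal_nonneg
  have hstep : ∀ m : ℕ, (μ (Stmt7Aux.NRset k m)).toReal
      = (μ (Stmt7Aux.NRset k (m + 1))).toReal
        + (μ {ω | waitingTime k ω = m + 1}).toReal := by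
    intro m
    have hu := measure_union (μ := μ) (Stmt7Aux.NR_disj (k := k) m)
      (Stmt7Aux.B_meas hk (show 1 ≤ m + 1 by omega))
    rw [← Stmt7Aux.NR_step hk m] at hu
    rw [hu, ENNReal.toReal_add (hfin _) (hfin _)]
  have hdec : ∀ m : ℕ, (μ (Stmt7Aux.NRset k (m + 1))).toReal ≤ (μ (Stmt7Aux.NRset k m)).toReal := by
    intro m
    have h1 := hstep m
    have h2 := hfnn (m + 1)
    linarith
  have hganti : Antitone (fun m => (μ (Stmt7Aux.NRset k m)).toReal) :=
    antitone_nat_of_succ_le hdec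
  have hg1 : ∀ m : ℕ, (μ (Stmt7Aux.NRset k m)).toReal ≤ 1 := by
    intro m
    simpa using ENNReal.toReal_mono ENNReal.one_ne_top (prob_le_one (μ := μ))
  have hkey : ∀ m : ℕ, (1 - p) * p ^ k * (μ (Stmt7Aux.NRset k m)).toReal
      = (μ (Stmt7Aux.NRset k (m + k))).toReal - (μ (Stmt7Aux.NRset k (m + k + 1))).toReal := by
    intro m
    have h1 := hstep (m + k)
    have h2 := hfval (m + k + 1) (by omega)
    rw [show m + k + 1 - k - 1 = m by omega] at h2
    rw [h2] at h1
    linarith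
  have hbound : ∀ N : ℕ, (1 - p) * p ^ k * (((N : ℝ) + 1) * (μ (Stmt7Aux.NRset k N)).toReal) ≤ 1 := by
    intro N
    have htel : ∑ m ∈ Finset.range (N + 1), ((1 - p) * p ^ k * (μ (Stmt7Aux.NRset k m)).toReal)
        = (μ (Stmt7Aux.NRset k (0 + k))).toReal - (μ (Stmt7Aux.NRset k (N + 1 + k))).toReal := by
      rw [Finset.sum_congr rfl (fun m _ => by
        rw [hkey m, show m + k + 1 = m + 1 + k by omega])]
      exact Finset.sum_range_sub' (fun m => (μ (Stmt7Aux.NRset k (m + k))).toReal) (N + 1)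
    have hlow : ((N : ℝ) + 1) * (μ (Stmt7Aux.NRset k N)).toReal
        ≤ ∑ m ∈ Finset.range (N + 1), (μ (Stmt7Aux.NRset k m)).toReal := by
      have h1 : ∀ m ∈ Finset.range (N + 1), (μ (Stmt7Aux.NRset k N)).toReal
          ≤ (μ (Stmt7Aux.NRset k m)).toReal :=
        fun m hm => hganti (Nat.le_of_lt_succ (Finset.mem_range.1 hm))
      calc ((N : ℝ) + 1) * (μ (Stmt7Aux.NRset k N)).toReal
          = ∑ _m ∈ Finset.range (N + 1), (μ (Stmt7Aux.NRset k N)).toReal := by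
            rw [Finset.sum_const, Finset.card_range, nsmul_eq_mul]
            push_cast
            ring
        _ ≤ _ := Finset.sum_le_sum h1
    calc (1 - p) * p ^ k * (((N : ℝ) + 1) * (μ (Stmt7Aux.NRset k N)).toReal)
        ≤ (1 - p) * p ^ k * ∑ m ∈ Finset.range (N + 1), (μ (Stmt7Aux.NRset k m)).toReal :=
          mul_le_mul_of_nonneg_left hlow (le_of_lt hcpos)
      _ = ∑ m ∈ Finset.range (N + 1), ((1 - p) * p ^ k * (μ (Stmt7Aux.NRset k m)).toReal) := by
          rw [Finset.mul_sum]
      _ = (μ (Stmt7Aux.NRset k (0 + k))).toReal - (μ (Stmt7Aux.NRset k (N + 1 + k))).toReal := htel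
      _ ≤ 1 := by
          have h1 := hg1 (0 + k)
          have h2 : (0:ℝ) ≤ (μ (Stmt7Aux.NRset k (N + 1 + k))).toReal := ENNReal.toReal_nonneg
          linarith
  refine ⟨?_, ?_, ?_, ?_⟩
  · intro v hvk
    rcases Nat.eq_zero_or_pos v with rfl | hv1
    · have hx0 : 0 ≤ (μ {ω | waitingTime k ω = 0}).toReal := ENNReal.toReal_nonneg
      have hxle : ∀ N : ℕ, (μ {ω | waitingTime k ω = 0}).toReal
          ≤ (μ (Stmt7Aux.NRset k N)).toReal :=
        fun N => ENNReal.toReal_mono (hfin _) (measure_mono (Stmt7Aux.B0_sub hk N))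
      by_contra hne
      have hxpos : 0 < (μ {ω | waitingTime k ω = 0}).toReal := lt_of_le_of_ne hx0 (Ne.symm hne)
      set x := (μ {ω | waitingTime k ω = 0}).toReal with hx
      have hcx : 0 < (1 - p) * p ^ k * x := mul_pos hcpos hxpos
      obtain ⟨N, hN⟩ := exists_nat_gt (1 / ((1 - p) * p ^ k * x))
      have hB : 1 < (N : ℝ) * ((1 - p) * p ^ k * x) := (div_lt_iff₀ hcx).1 hN
      have hA : (1 - p) * p ^ k * (((N : ℝ) + 1) * x)
          ≤ (1 - p) * p ^ k * (((N : ℝ) + 1) * (μ (Stmt7Aux.NRset k N)).toReal) := by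
        apply mul_le_mul_of_nonneg_left _ (le_of_lt hcpos)
        apply mul_le_mul_of_nonneg_left (hxle N) (by positivity)
      have hC := hbound N
      nlinarith [hcx]
    · rw [Stmt7Aux.Bsmall hv1 hvk]
      simp
  · rw [Stmt7Aux.Bk_eq hk]
    have h2 : μ {ω : ℕ → Bool | ∀ i, 1 ≤ i → i ≤ k → ω i = true}
        = ENNReal.ofReal (∏ i ∈ Finset.Icc 1 k, if (true : Bool) = true then p else 1 - p) :=
      hμ k (fun _ => true)
    rw [h2]
    simp only [if_pos rfl, Finset.prod_const, Nat.card_Icc, Nat.add_sub_cancel]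
    exact ENNReal.toReal_ofReal (by positivity)
  · rw [hfval (k + 1) (le_refl _), show k + 1 - k - 1 = 0 by omega]
    have h0 : (μ (Stmt7Aux.NRset k 0)).toReal = 1 := by
      rw [Stmt7Aux.NR_univ hk, measure_univ, ENNReal.toReal_one]
    rw [h0, mul_one]
  · intro v hv
    have h1 := hfval v (by omega)
    have h2 := hfval (v - 1) (by omega)
    rw [show v - 1 - k - 1 = v - k - 2 by omega] at h2
    have h3 := hstep (v - k - 2)
    rw [show v - k - 2 + 1 = v - k - 1 by omega] at h3
    have h4 := hfval (v - k - 1)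
    rw [h1, h2, h3]
    ring
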